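/- Finite field analogue of the multinomial expansion (n=1 binomial case with Jacobi sums): for a nontrivial multiplicative character A on F_q and x ∈ F_q, A(1+x) = δ(x) + (1/(q-1)) Σ_χ J(A, χ̄) χ(-x), where the sum is over all multiplicative characters χ of F_q, J(A,χ̄) = Σ_{c} A(1+c)χ̄(-c), and δ(x)=1 iff x=0. -/

import Mathlib

open Finset

variable {F : Type} [Field F] [Fintype F] [DecidableEq F]

noncomputable instance : Fintype (MulChar F ℂ) := Fintype.ofFinite _

lemma sum_chars_eq (a : F) :
    ∑ χ : MulChar F ℂ, χ a = if a = 1 then ((Fintype.card F : ℂ) - 1) else 0 := by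
  split_ifs with ha
  · subst ha
    simp only [map_one, Finset.sum_const, Finset.card_univ, nsmul_eq_mul, mul_one]
    have h : Nat.card (MulChar F ℂ) = Nat.card Fˣ :=
      MulChar.card_eq_card_units_of_hasEnoughRootsOfUnity F ℂ
    rw [Nat.card_eq_fintype_card, Nat.card_eq_fintype_card] at h
    rw [h, Fintype.card_units, Nat.cast_sub Fintype.card_pos, Nat.cast_one]
  · obtain ⟨χ, hχ⟩ := MulChar.exists_apply_ne_one_of_hasEnoughRootsOfUnity F ℂ ha
    refine eq_zero_of_mul_eq_self_left hχ ?_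
    simp only [Finset.mul_sum, ← MulChar.mul_apply]
    exact Fintype.sum_bijective _ (Group.mulLeft_bijective χ) _ _ fun χ' ↦ rfl

theorem char_binomial_expansion (A : MulChar F ℂ) (hA : A ≠ 1) (x : F) :
    A (1 + x) =
      (if x = 0 then (1 : ℂ) else 0) +
        1 / ((Fintype.card F : ℂ) - 1) *
          ∑ χ : MulChar F ℂ,
            (∑ c : F, A (1 + c) * χ⁻¹ (-c)) * χ (-x) := by
  have hq : ((Fintype.card F : ℂ) - 1) ≠ 0 := by
    rw [sub_ne_zero]
    exact_mod_cast Nat.ne_of_gt Fintype.one_lt_card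
  rcases eq_or_ne x 0 with hx | hx
  · subst hx
    simp [MulChar.map_zero]
  · have key : ∑ χ : MulChar F ℂ, (∑ c : F, A (1 + c) * χ⁻¹ (-c)) * χ (-x)
        = A (1 + x) * ((Fintype.card F : ℂ) - 1) := by
      calc ∑ χ : MulChar F ℂ, (∑ c : F, A (1 + c) * χ⁻¹ (-c)) * χ (-x)
          = ∑ χ : MulChar F ℂ, ∑ c : F, A (1 + c) * (χ⁻¹ (-c) * χ (-x)) := by
            simp_rw [Finset.sum_mul, mul_assoc]
        _ = ∑ c : F, A (1 + c) * ∑ χ : MulChar F ℂ, χ ((-c)⁻¹ * -x) := by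
            rw [Finset.sum_comm]
            simp_rw [MulChar.inv_apply', map_mul, Finset.mul_sum]
        _ = ∑ c : F, A (1 + c) * (if c = x then ((Fintype.card F : ℂ) - 1) else 0) := by
            refine Finset.sum_congr rfl fun c _ => ?_
            rw [sum_chars_eq]
            have hiff : (-c)⁻¹ * -x = 1 ↔ c = x := by
              constructor
              · intro h
                have hc : (-c) ≠ 0 := by
                  intro h0
                  rw [h0] at h
                  simp at h
                rw [inv_mul_eq_one₀ hc] at h
                exact neg_inj.mp h
              · rintro rfl
                rw [inv_mul_cancel₀ (neg_ne_zero.mpr hx)]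
            rw [if_congr hiff rfl rfl]
        _ = A (1 + x) * ((Fintype.card F : ℂ) - 1) := by
            simp [mul_ite]
    rw [key]
    rw [if_neg hx]
    field_simp
    ring
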